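/- arXiv:0909.3281 — 2 statements merged into one kernel-verified Lean document; each statement's English description precedes it below -/
import Mathlib

section
/- Let [e_1, ..., e_n] with e_i = ±1 be a 1-regular continued fraction equal to α/β (in lowest terms, α, β > 0). Then: n ≡ 2 (mod 3) iff α is even and β is odd; n ≡ 0 (mod 3) iff α is odd and β is even; n ≡ 1 (mod 3) iff α and β are both odd. -/
/-- Evaluation of a finite continued fraction `[a₁, a₂, …, aₙ] = a₁ + 1/(a₂ + 1/(⋯ + 1/aₙ))`. -/
def cf : List ℤ → ℚ
  | [] => 0
  | a :: l => a + (cf l)⁻¹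

/-- A continued fraction `[a₁, …, aₙ]` is 1-regular: all entries are nonzero,
`a_{n-1} aₙ > 0`, and there are no two consecutive sign changes. -/
def OneRegular (l : List ℤ) : Prop :=
  (∀ a ∈ l, a ≠ 0) ∧
  (2 ≤ l.length → 0 < l[l.length - 2]! * l[l.length - 1]!) ∧
  (∀ i, i + 2 < l.length → l[i]! * l[i + 1]! < 0 → 0 < l[i + 1]! * l[i + 2]!)

/-- numerator of the convergent -/
def num : List ℤ → ℤ
  | [] => 1
  | [a] => a
  | a :: b :: t => a * num (b :: t) + num t

/-- denominator of the convergent -/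
def den : List ℤ → ℤ
  | [] => 0
  | _ :: t => num t

lemma den_cons (a : ℤ) (l : List ℤ) : den (a :: l) = num l := rfl

lemma num_cons (a : ℤ) (l : List ℤ) : num (a :: l) = a * num l + den l := by
  cases l with
  | nil => simp [num, den]
  | cons b t => simp [num, den]

lemma gA (x : ℤ) (l : List ℤ) : (x :: l)[0]! = x := List.getElem!_cons_zero ..

lemma gB (x y : ℤ) (l : List ℤ) : (x :: y :: l)[1]! = y :=
  (List.getElem!_cons_succ (i := 0) ..).trans (gA y l)

lemma gC (x y z : ℤ) (l : List ℤ) : (x :: y :: z :: l)[2]! = z :=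
  (List.getElem!_cons_succ (i := 1) ..).trans (gB y z l)

lemma oneRegular_tail {a : ℤ} {l : List ℤ} (h : OneRegular (a :: l)) : OneRegular l := by
  obtain ⟨h1, h2, h3⟩ := h
  refine ⟨fun x hx => h1 x (List.mem_cons_of_mem _ hx), ?_, ?_⟩
  · intro hlen
    obtain ⟨k, hk⟩ : ∃ k, l.length = k + 2 := ⟨l.length - 2, by omega⟩
    have h := h2 (by simp only [List.length_cons]; omega)
    simp only [List.length_cons, hk] at h
    have e1 : k + 2 + 1 - 2 = k + 1 := by omega
    have e2 : k + 2 + 1 - 1 = k + 2 := by omega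
    rw [e1, e2, show k + 2 = (k+1)+1 from rfl, List.getElem!_cons_succ,
      List.getElem!_cons_succ] at h
    rw [hk]
    have e3 : k + 2 - 2 = k := by omega
    have e4 : k + 2 - 1 = k + 1 := by omega
    rw [e3, e4]
    exact h
  · intro i hi hlt
    have h := h3 (i + 1) (by simp; omega)
    rw [List.getElem!_cons_succ, List.getElem!_cons_succ,
      show i + 1 + 2 = (i+2)+1 from rfl, List.getElem!_cons_succ] at h
    exact h hlt

lemma key : ∀ (l : List ℤ), (∀ e ∈ l, e = 1 ∨ e = -1) → OneRegular l →
    ∀ a t, l = a :: t →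
    0 < (a : ℚ) * cf l ∧ (∀ b t', t = b :: t' → 0 < a * b → 1 < (a : ℚ) * cf l) := by
  intro l
  induction l with
  | nil => intro _ _ a t h; simp at h
  | cons x s ih =>
    intro hpm hreg a t heq
    injection heq with hx ht
    subst hx; subst ht
    cases s with
    | nil =>
      constructor
      · rcases hpm x (by simp) with rfl | rfl <;> norm_num [cf]
      · intro b t' h; simp at h
    | cons b t' =>
      have hpms : ∀ e ∈ b :: t', e = 1 ∨ e = -1 := fun e he => hpm e (List.mem_cons_of_mem _ he)
      have hregs := oneRegular_tail hreg
      obtain ⟨hy, hys⟩ := ih hpms hregs b t' rfl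
      set y := cf (b :: t') with hydef
      have hyne : y ≠ 0 := by
        intro h; rw [h, mul_zero] at hy; exact lt_irrefl 0 hy
      have hcf : cf (x :: b :: t') = (x : ℚ) + y⁻¹ := rfl
      rcases hpm x (by simp) with rfl | rfl <;> rcases hpm b (by simp) with rfl | rfl
      · -- a = 1, b = 1
        have hy' : 0 < y := by push_cast at hy; linarith
        have h1 : 1 < (1 : ℚ) * cf (1 :: 1 :: t') := by
          rw [hcf]
          have := inv_pos.mpr hy'
          push_cast
          linarith
        exact ⟨by push_cast at h1 ⊢; linarith, fun _ _ _ _ => by push_cast at h1 ⊢; linarith⟩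
      · -- a = 1, b = -1 : sign change
        have hbc : 1 < (-1 : ℚ) * y := by
          cases t' with
          | nil =>
            exfalso
            have h2 := hreg.2.1 (by simp)
            simp only [List.length_cons, List.length_nil] at h2
            norm_num [gA, gB] at h2
          | cons c t'' =>
            have h3 := hreg.2.2 0 (by simp)
            norm_num [gA, gB, gC] at h3
            exact hys c t'' rfl (by linarith)
        have hyneg : y < -1 := by linarith
        constructor
        · rw [hcf]
          push_cast
          have h4 : (1 : ℚ) + y⁻¹ = (y + 1) / y := by field_simp
          rw [one_mul, h4]
          apply div_pos_of_neg_of_neg <;> linarith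
        · intro b'' t'' heq hab
          injection heq with hb _
          rw [← hb] at hab
          norm_num at hab
      · -- a = -1, b = 1 : sign change
        have hbc : 1 < (1 : ℚ) * y := by
          cases t' with
          | nil =>
            exfalso
            have h2 := hreg.2.1 (by simp)
            simp only [List.length_cons, List.length_nil] at h2
            norm_num [gA, gB] at h2
          | cons c t'' =>
            have h3 := hreg.2.2 0 (by simp)
            norm_num [gA, gB, gC] at h3
            exact hys c t'' rfl (by linarith)
        have hy1 : 1 < y := by linarith
        constructor
        · rw [hcf]
          have hinv1 : y⁻¹ < 1 := by
            have h0 : (0:ℚ) < y := by linarith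
            rw [inv_lt_one_iff₀]; right; exact hy1
          have hinv0 : 0 < y⁻¹ := inv_pos.mpr (by linarith)
          push_cast
          nlinarith
        · intro b'' t'' heq hab
          injection heq with hb _
          rw [← hb] at hab
          norm_num at hab
      · -- a = -1, b = -1
        have hy' : y < 0 := by push_cast at hy; linarith
        have h1 : 1 < (-1 : ℚ) * cf (-1 :: -1 :: t') := by
          rw [hcf]
          have := inv_neg''.mpr hy'
          push_cast
          linarith
        exact ⟨by push_cast at h1 ⊢; linarith, fun _ _ _ _ => by push_cast at h1 ⊢; linarith⟩

lemma cf_eq (l : List ℤ) (hpm : ∀ e ∈ l, e = 1 ∨ e = -1) (hreg : OneRegular l) :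
    cf l = (num l : ℚ) / den l ∧ num l ≠ 0 := by
  induction l with
  | nil => refine ⟨by simp [cf, num, den], by simp [num]⟩
  | cons a t ih =>
    have hpmt : ∀ e ∈ t, e = 1 ∨ e = -1 := fun e he => hpm e (List.mem_cons_of_mem _ he)
    have hregt := oneRegular_tail hreg
    obtain ⟨h1, h2⟩ := ih hpmt hregt
    have hcf : cf (a :: t) = (num (a :: t) : ℚ) / den (a :: t) := by
      rw [show cf (a :: t) = (a : ℚ) + (cf t)⁻¹ from rfl, h1, num_cons, den_cons]
      rcases eq_or_ne (den t) 0 with h | h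
      · rw [h]
        push_cast
        rw [div_zero, inv_zero, add_zero, add_zero, mul_div_assoc,
          div_self (show (num t : ℚ) ≠ 0 by exact_mod_cast h2), mul_one]
      · have h2' : (num t : ℚ) ≠ 0 := by exact_mod_cast h2
        have h' : (den t : ℚ) ≠ 0 := by exact_mod_cast h
        field_simp
        push_cast
        ring
    refine ⟨hcf, ?_⟩
    intro h0
    have hk := (key (a :: t) hpm hreg a t rfl).1
    rw [hcf, h0] at hk
    norm_num at hk

lemma num_coprime_den (l : List ℤ) : IsCoprime (num l) (den l) := by
  induction l with
  | nil => simpa [num, den] using isCoprime_one_left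
  | cons a t ih =>
    rw [num_cons, den_cons]
    have h := (ih.symm.add_mul_left_left a)
    have e : den t + num t * a = a * num t + den t := by ring
    rwa [e] at h

lemma parity (l : List ℤ) (hpm : ∀ e ∈ l, e = 1 ∨ e = -1) :
    (l.length % 3 = 0 → num l % 2 = 1 ∧ den l % 2 = 0) ∧
    (l.length % 3 = 1 → num l % 2 = 1 ∧ den l % 2 = 1) ∧
    (l.length % 3 = 2 → num l % 2 = 0 ∧ den l % 2 = 1) := by
  induction l with
  | nil => simp [num, den]
  | cons a t ih =>
    have h := ih (fun e he => hpm e (List.mem_cons_of_mem _ he))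
    rw [num_cons, den_cons, List.length_cons]
    rcases hpm a (by simp) with rfl | rfl <;> omega

theorem length_mod_three_parity (l : List ℤ) (hpm : ∀ e ∈ l, e = 1 ∨ e = -1)
    (hreg : OneRegular l) (α β : ℤ) (hα : 0 < α) (hβ : 0 < β)
    (hcop : IsCoprime α β) (hval : cf l = (α : ℚ) / β) :
    (l.length % 3 = 2 ↔ Even α ∧ Odd β) ∧
    (l.length % 3 = 0 ↔ Odd α ∧ Even β) ∧
    (l.length % 3 = 1 ↔ Odd α ∧ Odd β) := by
  have hlne : l ≠ [] := by
    intro h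
    subst h
    have hpos : (0 : ℚ) < (α : ℚ) / β := by
      apply div_pos <;> exact_mod_cast (by assumption)
    rw [← hval] at hpos
    simp [cf] at hpos
  obtain ⟨a, t, rfl⟩ : ∃ a t, l = a :: t := by
    cases l with
    | nil => exact absurd rfl hlne
    | cons a t => exact ⟨a, t, rfl⟩
  obtain ⟨hcf, hnum⟩ := cf_eq (a :: t) hpm hreg
  have hden : den (a :: t) ≠ 0 := by
    rw [den_cons]
    exact (cf_eq t (fun e he => hpm e (List.mem_cons_of_mem _ he)) (oneRegular_tail hreg)).2
  set N := num (a :: t) with hN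
  set D := den (a :: t) with hD
  have hE : N * β = α * D := by
    rw [hcf] at hval
    have hDq : (D : ℚ) ≠ 0 := by exact_mod_cast hden
    have hβq : (β : ℚ) ≠ 0 := by exact_mod_cast hβ.ne'
    rw [div_eq_div_iff hDq hβq] at hval
    exact_mod_cast hval
  have hcopND := num_coprime_den (a :: t)
  have hαN : α ∣ N := hcop.dvd_of_dvd_mul_right ⟨D, by linear_combination hE⟩
  have hNα : N ∣ α := hcopND.dvd_of_dvd_mul_right ⟨β, by linear_combination -hE⟩
  have hβD : β ∣ D := hcop.symm.dvd_of_dvd_mul_right ⟨N, by linear_combination -hE⟩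
  have hDβ : D ∣ β := hcopND.symm.dvd_of_dvd_mul_right ⟨α, by linear_combination hE⟩
  have h1 : N = α ∨ N = -α := by
    have := Nat.dvd_antisymm (Int.natAbs_dvd_natAbs.mpr hNα) (Int.natAbs_dvd_natAbs.mpr hαN)
    exact Int.natAbs_eq_natAbs_iff.mp this
  have h2 : D = β ∨ D = -β := by
    have := Nat.dvd_antisymm (Int.natAbs_dvd_natAbs.mpr hDβ) (Int.natAbs_dvd_natAbs.mpr hβD)
    exact Int.natAbs_eq_natAbs_iff.mp this
  have hp := parity (a :: t) hpm
  rw [← hN, ← hD] at hp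
  simp only [Int.even_iff, Int.odd_iff]
  omega
end

section
/- Let b = 3n+1 and θ = (n/(3n+1))π. Then for j ∈ {1,2,3} and k ∈ {0, ..., n-1}, the sign of sin((3k+j)θ) equals (-1)^k, and consequently the continued fraction [1,1,1,-1,-1,-1,...,(-1)^{n+1},(-1)^{n+1},(-1)^{n+1}] (the signs alternating in blocks of three, total length 3n) equals (2n+1)/(2n). -/
lemma cf_neg (l : List ℤ) : cf (l.map (fun a => -a)) = -cf l := by
  induction l with
  | nil => simp [cf]
  | cons a l ih => simp [cf, ih, inv_neg]; ring

lemma cf_step (q : ℚ) (hq : 0 < q) :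
    1 + (1 + (1 + (-((2*q+1)/(2*q)))⁻¹)⁻¹)⁻¹ = (2*(q+1)+1)/(2*(q+1)) := by
  have h1 : (2*q) ≠ 0 := by positivity
  have h2 : (2*q+1) ≠ 0 := by positivity
  rw [inv_neg, inv_div]
  rw [show 1 + -(2*q/(2*q+1)) = 1/(2*q+1) by field_simp; ring]
  rw [one_div, inv_inv]
  rw [show 1 + (2*q+1) = 2*q+2 by ring]
  have h3 : (2*q+2) ≠ 0 := by positivity
  field_simp

lemma cf_eval (n : ℕ) (hn : 1 ≤ n) :
    cf ((List.range (3 * n)).map fun i => (-1 : ℤ) ^ (i / 3)) =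
      (2 * (n : ℚ) + 1) / (2 * (n : ℚ)) := by
  induction n, hn using Nat.le_induction with
  | base =>
    have : List.range (3 * 1) = [0, 1, 2] := rfl
    rw [this]
    simp [cf]
    norm_num
  | succ n hn ih =>
    have h3 : 3 * (n + 1) = 3 + 3 * n := by ring
    rw [h3, List.range_add, List.map_append, List.map_map]
    have hf : ((fun i => (-1 : ℤ) ^ (i / 3)) ∘ fun x => 3 + x) =
        (fun a => -a) ∘ (fun i => (-1 : ℤ) ^ (i / 3)) := by
      funext i
      simp only [Function.comp]
      rw [add_comm, Nat.add_div_right _ (by norm_num), pow_succ]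
      ring
    rw [hf, ← List.map_map]
    have hr : List.range 3 = [0, 1, 2] := rfl
    rw [hr]
    simp only [List.map_cons, List.map_nil, List.cons_append, List.nil_append]
    show cf (1 :: 1 :: 1 :: _) = _
    rw [cf, cf, cf, cf_neg, ih]
    have hq : (0 : ℚ) < (n : ℚ) := by exact_mod_cast hn
    push_cast
    exact cf_step (n : ℚ) hq

/-- For `b = 3n+1` and `θ = (n/(3n+1))π`: for `j ∈ {1,2,3}` and `0 ≤ k < n` the sign of
`sin((3k+j)θ)` is `(-1)^k`, and the continued fraction
`[1,1,1,-1,-1,-1,…,(-1)^{n+1},(-1)^{n+1},(-1)^{n+1}]` of length `3n`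
(signs alternating in blocks of three) equals `(2n+1)/(2n)`. -/
theorem torus_knot_conway_form (n : ℕ) (hn : 1 ≤ n) :
    (∀ j ∈ ({1, 2, 3} : Finset ℕ), ∀ k < n,
      0 < (-1 : ℝ) ^ k *
        Real.sin ((3 * (k : ℝ) + (j : ℝ)) * ((n : ℝ) / (3 * (n : ℝ) + 1) * Real.pi))) ∧
    cf ((List.range (3 * n)).map fun i => (-1 : ℤ) ^ (i / 3)) =
      (2 * (n : ℚ) + 1) / (2 * (n : ℚ)) := by
  constructor
  · intro j hj k hk
    have hj' : 1 ≤ j ∧ j ≤ 3 := by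
      fin_cases hj <;> omega
    have hnR : (1 : ℝ) ≤ (n : ℝ) := by exact_mod_cast hn
    have hkR : (k : ℝ) ≤ (n : ℝ) - 1 := by
      have : (k : ℝ) + 1 ≤ (n : ℝ) := by exact_mod_cast hk
      linarith
    have hjR : (1 : ℝ) ≤ (j : ℝ) ∧ (j : ℝ) ≤ 3 :=
      ⟨by exact_mod_cast hj'.1, by exact_mod_cast hj'.2⟩
    have hjR2 : (j : ℝ) ≤ 3 := by exact_mod_cast hj'.2
    have hb : (0 : ℝ) < 3 * (n : ℝ) + 1 := by linarith
    set y : ℝ := ((j : ℝ) * n - k) / (3 * (n : ℝ) + 1) * Real.pi with hy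
    have hx : (3 * (k : ℝ) + (j : ℝ)) * ((n : ℝ) / (3 * (n : ℝ) + 1) * Real.pi) =
        y + (k : ℕ) * Real.pi := by
      rw [hy]
      field_simp
      ring
    rw [hx, Real.sin_add_nat_mul_pi, ← mul_assoc, ← mul_pow]
    simp only [neg_mul_neg, one_mul, one_pow]
    apply Real.sin_pos_of_pos_of_lt_pi
    · rw [hy]
      have hnum : (0 : ℝ) < (j : ℝ) * n - k := by nlinarith [hjR.1]
      positivity
    · rw [hy]
      have hnum : (j : ℝ) * n - k < 3 * (n : ℝ) + 1 := by nlinarith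
      have h1 : ((j : ℝ) * n - k) / (3 * (n : ℝ) + 1) < 1 := by
        rw [div_lt_one hb]; exact hnum
      calc ((j : ℝ) * n - k) / (3 * (n : ℝ) + 1) * Real.pi
          < 1 * Real.pi := by
            apply mul_lt_mul_of_pos_right h1 Real.pi_pos
        _ = Real.pi := one_mul _
  · exact cf_eval n hn
end
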